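/- Let α, β be real numbers with 0 < α < β, and let c : ℤ → ℝ_{≥0} be a function such that c(n)·α^n → 0 as n → -∞ and c(n)·β^n → 0 as n → +∞. Set M := max( sup_{n ≤ 0} c(n)·α^n , sup_{n ≥ 0} c(n)·β^n ), assume M > 0, and assume that the set A := { n ≤ 0 : c(n)·α^n = M } is nonempty; let n₀ be the maximal element of A (A is finite by the decay hypotheses). Then there exist real numbers α', β' with α < α' < β' ≤ β such that for every integer n ≠ n₀ and every ρ ∈ [α', β'] one has c(n)·ρ^n < c(n₀)·ρ^{n₀}. (This is the Claim in the proof of Lemma 1.7, applied to the coefficient norms c(n) = |a_n| of a function a = Σ_n a_n t^n on a relative annulus of radii [α, β].) -/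

import Mathlib

open Filter

lemma zpow_le_zpow_left_aux {x y : ℝ} (hx : 0 ≤ x) (hxy : x ≤ y) {m : ℤ} (hm : 0 ≤ m) :
    x ^ m ≤ y ^ m := by
  obtain ⟨k, rfl⟩ := Int.eq_ofNat_of_zero_le hm
  rw [zpow_natCast, zpow_natCast]
  exact pow_le_pow_left₀ hx hxy k

lemma zpow_anti_left_aux {x y : ℝ} (hx : 0 < x) (hxy : x ≤ y) {m : ℤ} (hm : m ≤ 0) :
    y ^ m ≤ x ^ m := by
  obtain ⟨k, rfl⟩ : ∃ k : ℕ, m = -(k : ℤ) := ⟨(-m).toNat, by omega⟩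
  rw [zpow_neg, zpow_neg]
  exact inv_anti₀ (zpow_pos hx _)
    (zpow_le_zpow_left_aux hx.le hxy (m := (k : ℤ)) (by positivity))

theorem dominant_monomial_claim
    (α β : ℝ) (hα : 0 < α) (hαβ : α < β)
    (c : ℤ → ℝ) (hc : ∀ n, 0 ≤ c n)
    (hbot : Tendsto (fun n : ℤ => c n * α ^ n) atBot (nhds 0))
    (htop : Tendsto (fun n : ℤ => c n * β ^ n) atTop (nhds 0))
    (M : ℝ)
    (hM : M = max (⨆ n : {n : ℤ // n ≤ 0}, c n * α ^ (n : ℤ))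
                  (⨆ n : {n : ℤ // 0 ≤ n}, c n * β ^ (n : ℤ)))
    (hMpos : 0 < M)
    (n₀ : ℤ) (hn₀le : n₀ ≤ 0) (hn₀M : c n₀ * α ^ n₀ = M)
    (hn₀max : ∀ n : ℤ, n ≤ 0 → c n * α ^ n = M → n ≤ n₀) :
    ∃ α' β' : ℝ, α < α' ∧ α' < β' ∧ β' ≤ β ∧
      ∀ n : ℤ, n ≠ n₀ → ∀ ρ ∈ Set.Icc α' β', c n * ρ ^ n < c n₀ * ρ ^ n₀ := by
  have hβ : 0 < β := hα.trans hαβ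
  -- step 1: uniform bounds from the suprema
  have hA : ∀ n : ℤ, n ≤ 0 → c n * α ^ n ≤ M := by
    obtain ⟨N, hN⟩ : ∃ N : ℤ, ∀ n ≤ N, c n * α ^ n < 1 :=
      eventually_atBot.mp (hbot.eventually_lt_const one_pos)
    have hbdd : BddAbove (Set.range fun n : {n : ℤ // n ≤ 0} => c n * α ^ (n : ℤ)) := by
      set s : Finset ℝ := insert (1 : ℝ) ((Finset.Icc N 0).image fun n => c n * α ^ n) with hs
      refine ⟨s.max' ⟨1, by simp [hs]⟩, ?_⟩
      rintro x ⟨⟨n, hn⟩, rfl⟩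
      by_cases h : n ≤ N
      · exact (hN n h).le.trans (s.le_max' 1 (by simp [hs]))
      · exact s.le_max' _ (Finset.mem_insert_of_mem
          (Finset.mem_image_of_mem _ (Finset.mem_Icc.mpr ⟨by omega, hn⟩)))
    intro n hn
    calc c n * α ^ n = (fun m : {m : ℤ // m ≤ 0} => c m * α ^ (m : ℤ)) ⟨n, hn⟩ := rfl
      _ ≤ ⨆ m : {m : ℤ // m ≤ 0}, c m * α ^ (m : ℤ) := le_ciSup hbdd ⟨n, hn⟩
      _ ≤ M := hM ▸ le_max_left _ _
  have hB : ∀ n : ℤ, 0 ≤ n → c n * β ^ n ≤ M := by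
    obtain ⟨N, hN⟩ : ∃ N : ℤ, ∀ n ≥ N, c n * β ^ n < 1 :=
      eventually_atTop.mp (htop.eventually_lt_const one_pos)
    have hbdd : BddAbove (Set.range fun n : {n : ℤ // 0 ≤ n} => c n * β ^ (n : ℤ)) := by
      set s : Finset ℝ := insert (1 : ℝ) ((Finset.Icc 0 N).image fun n => c n * β ^ n) with hs
      refine ⟨s.max' ⟨1, by simp [hs]⟩, ?_⟩
      rintro x ⟨⟨n, hn⟩, rfl⟩
      by_cases h : N ≤ n
      · exact (hN n h).le.trans (s.le_max' 1 (by simp [hs]))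
      · exact s.le_max' _ (Finset.mem_insert_of_mem
          (Finset.mem_image_of_mem _ (Finset.mem_Icc.mpr ⟨hn, by omega⟩)))
    intro n hn
    calc c n * β ^ n = (fun m : {m : ℤ // 0 ≤ m} => c m * β ^ (m : ℤ)) ⟨n, hn⟩ := rfl
      _ ≤ ⨆ m : {m : ℤ // 0 ≤ m}, c m * β ^ (m : ℤ) := le_ciSup hbdd ⟨n, hn⟩
      _ ≤ M := hM ▸ le_max_right _ _
  -- step 2: δ, the largest coefficient above n₀
  set s : Finset ℝ := insert (0 : ℝ) ((Finset.Ioc n₀ 0).image fun n => c n * α ^ n) with hs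
  set δ : ℝ := s.max' ⟨0, by simp [hs]⟩ with hδ
  have hδ0 : 0 ≤ δ := s.le_max' 0 (by simp [hs])
  have hδM : δ < M := by
    rw [hδ]; refine (Finset.max'_lt_iff ..).mpr ?_
    intro x hx
    rcases Finset.mem_insert.mp hx with rfl | hx
    · exact hMpos
    · obtain ⟨n, hn, rfl⟩ := Finset.mem_image.mp hx
      obtain ⟨hn1, hn2⟩ := Finset.mem_Ioc.mp hn
      rcases (hA n hn2).lt_or_eq with h | h
      · exact h
      · exact absurd (hn₀max n hn2 h) (by omega)
  have hδle : ∀ n : ℤ, n₀ < n → n ≤ 0 → c n * α ^ n ≤ δ := fun n h1 h2 =>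
    s.le_max' _ (Finset.mem_insert_of_mem
      (Finset.mem_image_of_mem _ (Finset.mem_Ioc.mpr ⟨h1, h2⟩)))
  -- step 3: choose β'
  have hcont : ∀ᶠ x in nhdsWithin α (Set.Ioi α),
      x < β ∧ x / β < (x / α) ^ n₀ ∧ δ * (x / α) ^ (-n₀) < M := by
    apply eventually_nhdsWithin_of_eventually_nhds
    have hzpow : ∀ m : ℤ, ContinuousAt (fun x : ℝ => (x / α) ^ m) α := fun m =>
      (continuousAt_id.div_const α).zpow₀ m (Or.inl (by simp [div_self hα.ne']))
    have e1 : ∀ᶠ x in nhds α, x < β :=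
      continuousAt_id.eventually_lt continuousAt_const hαβ
    have e2 : ∀ᶠ x in nhds α, x / β < (x / α) ^ n₀ := by
      refine (continuousAt_id.div_const β).eventually_lt (hzpow n₀) ?_
      simp [div_self hα.ne', (div_lt_one hβ).mpr hαβ]
    have e3 : ∀ᶠ x in nhds α, δ * (x / α) ^ (-n₀) < M := by
      refine (continuousAt_const.mul (hzpow (-n₀))).eventually_lt continuousAt_const ?_
      simpa [div_self hα.ne'] using hδM
    exact e1.and (e2.and e3)
  obtain ⟨β', hβ'mem, hβ'β, hβ'2, hβ'3⟩ :
      ∃ x, x ∈ Set.Ioi α ∧ x < β ∧ x / β < (x / α) ^ n₀ ∧ δ * (x / α) ^ (-n₀) < M := by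
    obtain ⟨x, hx1, hx2⟩ := (hcont.and eventually_mem_nhdsWithin).exists
    exact ⟨x, hx2, hx1.1, hx1.2.1, hx1.2.2⟩
  have hαβ' : α < β' := hβ'mem
  refine ⟨(α + β') / 2, β', by linarith, by linarith, hβ'β.le, ?_⟩
  intro n hn ρ hρ
  obtain ⟨hρ1, hρ2⟩ := hρ
  have hρα : α < ρ := by linarith
  have hρ0 : 0 < ρ := hα.trans hρα
  have hr1 : (1 : ℝ) < ρ / α := (one_lt_div hα).mpr hρα
  have hr0 : (0 : ℝ) < ρ / α := by positivity
  have hsplit : ∀ m : ℤ, ρ ^ m = α ^ m * (ρ / α) ^ m := by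
    intro m
    rw [← mul_zpow]
    congr 1
    field_simp
  have hRHS : c n₀ * ρ ^ n₀ = M * (ρ / α) ^ n₀ := by
    rw [hsplit, ← mul_assoc, hn₀M]
  rw [hRHS]
  have hrρβ' : ρ / α ≤ β' / α := by
    gcongr
  by_cases hn0 : n ≤ 0
  · rcases hn.lt_or_gt with hlt | hgt
    · -- n < n₀
      calc c n * ρ ^ n = (c n * α ^ n) * (ρ / α) ^ n := by rw [hsplit n]; ring
        _ ≤ M * (ρ / α) ^ n :=
            mul_le_mul_of_nonneg_right (hA n hn0) (zpow_nonneg hr0.le n)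
        _ < M * (ρ / α) ^ n₀ :=
            mul_lt_mul_of_pos_left ((zpow_right_strictMono₀ hr1) hlt) hMpos
    · -- n₀ < n ≤ 0
      have key : δ * (ρ / α) ^ (n - n₀) < M := by
        have e1 : (ρ / α) ^ (n - n₀) ≤ (β' / α) ^ (n - n₀) :=
          zpow_le_zpow_left_aux hr0.le hrρβ' (by omega)
        have e2 : (β' / α) ^ (n - n₀) ≤ (β' / α) ^ (-n₀) :=
          zpow_le_zpow_right₀ (by rw [le_div_iff₀ hα]; linarith) (by omega)
        calc δ * (ρ / α) ^ (n - n₀) ≤ δ * (β' / α) ^ (-n₀) :=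
              mul_le_mul_of_nonneg_left (e1.trans e2) hδ0
          _ < M := hβ'3
      calc c n * ρ ^ n = (c n * α ^ n) * (ρ / α) ^ n := by rw [hsplit n]; ring
        _ ≤ δ * (ρ / α) ^ n :=
            mul_le_mul_of_nonneg_right (hδle n hgt hn0) (zpow_nonneg hr0.le n)
        _ = (δ * (ρ / α) ^ (n - n₀)) * (ρ / α) ^ n₀ := by
            rw [mul_assoc, ← zpow_add₀ hr0.ne']; ring_nf
        _ < M * (ρ / α) ^ n₀ :=
            mul_lt_mul_of_pos_right key (zpow_pos hr0 n₀)
  · -- 0 < n, so 1 ≤ n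
    push_neg at hn0
    have hn1 : (1 : ℤ) ≤ n := hn0
    have hρβ : ρ < β := lt_of_le_of_lt hρ2 hβ'β
    have hq0 : (0 : ℝ) < ρ / β := by positivity
    have hq1 : ρ / β < 1 := (div_lt_one hβ).mpr hρβ
    have hsplitβ : ρ ^ n = β ^ n * (ρ / β) ^ n := by
      rw [← mul_zpow]; congr 1; field_simp
    calc c n * ρ ^ n = (c n * β ^ n) * (ρ / β) ^ n := by rw [hsplitβ]; ring
      _ ≤ M * (ρ / β) ^ n :=
          mul_le_mul_of_nonneg_right (hB n hn0.le) (zpow_nonneg hq0.le n)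
      _ ≤ M * (ρ / β) ^ (1 : ℤ) :=
          mul_le_mul_of_nonneg_left (zpow_right_anti₀ hq0 hq1.le hn1) hMpos.le
      _ = M * (ρ / β) := by rw [zpow_one]
      _ ≤ M * (β' / β) :=
          mul_le_mul_of_nonneg_left (by gcongr) hMpos.le
      _ < M * (β' / α) ^ n₀ := mul_lt_mul_of_pos_left hβ'2 hMpos
      _ ≤ M * (ρ / α) ^ n₀ :=
          mul_le_mul_of_nonneg_left (zpow_anti_left_aux hr0 hrρβ' hn₀le) hMpos.le
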